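/- (Boundness) Let V ∈ ℝ^{D×M} have columns v_1, …, v_M ∈ ℝ^D with ‖v_i‖₁ ≤ 1 for all i, let Δ^q V ∈ ℝ^{(D−q)×M} denote the matrix whose i-th column is Δ^q v_i, and define the q-th order similarity matrix Δ^q S := (Δ^q V)ᵀ (Δ^q V) ∈ ℝ^{M×M}. Then for every q with 2 ≤ q ≤ D−1, ‖Δ^q S − 0‖₁ ≤ (2^{q−2} · ‖Δ² V‖₁)², where 0 is the all-zero M×M matrix. -/
import Mathlib


open Matrix

/-- The `q`-th order forward difference of a vector `v ∈ ℝ^D`, defined recursively by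
`Δ⁰v = v` and `(Δ^{q+1} v)(i) = (Δ^q v)(i+1) - (Δ^q v)(i)`. -/
def delta {D : ℕ} (v : Fin D → ℝ) : (q : ℕ) → Fin (D - q) → ℝ
  | 0, i => v i
  | q + 1, i =>
      delta v q ⟨i.val + 1, by have := i.isLt; omega⟩ -
      delta v q ⟨i.val, by have := i.isLt; omega⟩

/-- L1 norm of a vector: the sum of the absolute values of its entries. -/
def l1 {n : ℕ} (v : Fin n → ℝ) : ℝ := ∑ i, |v i|

/-- Entrywise L1 norm of a matrix. -/
def matL1 {n m : ℕ} (A : Matrix (Fin n) (Fin m) ℝ) : ℝ := ∑ i, ∑ j, |A i j|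

/-- Columnwise `q`-th order forward difference of a matrix `V ∈ ℝ^{D×M}`. -/
def deltaMat {D M : ℕ} (V : Matrix (Fin D) (Fin M) ℝ) (q : ℕ) :
    Matrix (Fin (D - q)) (Fin M) ℝ :=
  Matrix.of fun i j => delta (fun d => V d j) q i

/-- The Toeplitz matrix `A_q ∈ ℝ^{(D−q)×D}` representing the `q`-th order forward
difference: `A_q(i,j) = (−1)^{q−(j−i)} C(q, j−i)` when `0 ≤ j−i ≤ q`, else `0`. -/
def Aq (D q : ℕ) : Matrix (Fin (D - q)) (Fin D) ℝ :=
  Matrix.of fun i j =>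
    if i.val ≤ j.val ∧ j.val ≤ i.val + q then
      (-1 : ℝ) ^ (q - (j.val - i.val)) * (q.choose (j.val - i.val))
    else 0

lemma sum_abs_comp_le {n m : ℕ} (w : Fin m → ℝ) (f : Fin n → Fin m)
    (hf : Function.Injective f) : ∑ i, |w (f i)| ≤ ∑ j, |w j| := by
  calc ∑ i, |w (f i)|
      = ∑ j ∈ Finset.univ.image f, |w j| :=
        (Finset.sum_image (f := fun j => |w j|) (g := f) (fun a _ b _ h => hf h)).symm
    _ ≤ ∑ j, |w j| := Finset.sum_le_sum_of_subset_of_nonneg (Finset.subset_univ _)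
        (fun _ _ _ => abs_nonneg _)

lemma l1_nonneg {n : ℕ} (v : Fin n → ℝ) : 0 ≤ l1 v :=
  Finset.sum_nonneg fun _ _ => abs_nonneg _

lemma l1_delta_succ_le {D : ℕ} (v : Fin D → ℝ) (q : ℕ) :
    l1 (delta v (q + 1)) ≤ 2 * l1 (delta v q) := by
  have h : ∀ i : Fin (D - (q + 1)),
      |delta v (q + 1) i| ≤
        |delta v q ⟨i.val + 1, by have := i.isLt; omega⟩| +
        |delta v q ⟨i.val, by have := i.isLt; omega⟩| := by
    intro i
    simp only [delta]
    exact abs_sub _ _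
  calc l1 (delta v (q + 1)) ≤
      (∑ i : Fin (D - (q + 1)), |delta v q ⟨i.val + 1, by have := i.isLt; omega⟩|) +
      (∑ i : Fin (D - (q + 1)), |delta v q ⟨i.val, by have := i.isLt; omega⟩|) := by
        rw [← Finset.sum_add_distrib]
        exact Finset.sum_le_sum fun i _ => h i
    _ ≤ l1 (delta v q) + l1 (delta v q) := by
        refine add_le_add ?_ ?_
        · exact sum_abs_comp_le (delta v q)
            (fun i => ⟨i.val + 1, by have := i.isLt; omega⟩)
            (fun a b hab => by
              simp only [Fin.mk.injEq, add_left_inj] at hab; exact Fin.ext hab)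
        · exact sum_abs_comp_le (delta v q)
            (fun i => ⟨i.val, by have := i.isLt; omega⟩)
            (fun a b hab => by
              simp only [Fin.mk.injEq] at hab; exact Fin.ext hab)
    _ = 2 * l1 (delta v q) := by ring

lemma l1_delta_le {D : ℕ} (v : Fin D → ℝ) (q : ℕ) (hq : 2 ≤ q) :
    l1 (delta v q) ≤ 2 ^ (q - 2) * l1 (delta v 2) := by
  induction q with
  | zero => omega
  | succ n ih =>
    rcases Nat.lt_or_ge n 2 with h | h
    · interval_cases n
      · omega
      · simp
    · have h1 := l1_delta_succ_le v n
      have h2 := ih h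
      have : n + 1 - 2 = (n - 2) + 1 := by omega
      rw [this, pow_succ]
      calc l1 (delta v (n + 1)) ≤ 2 * l1 (delta v n) := h1
        _ ≤ 2 * (2 ^ (n - 2) * l1 (delta v 2)) := by linarith
        _ = 2 ^ (n - 2) * 2 * l1 (delta v 2) := by ring

/-- Boundness: for L1-bounded columns and 2 ≤ q ≤ D−1,
‖Δ^q S − 0‖₁ ≤ (2^{q−2} ‖Δ² V‖₁)² where Δ^q S = (Δ^q V)ᵀ (Δ^q V). -/
theorem boundness (D M q : ℕ) (hq2 : 2 ≤ q) (hq : q ≤ D - 1)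
    (V : Matrix (Fin D) (Fin M) ℝ) (hV : ∀ j : Fin M, l1 (fun d => V d j) ≤ 1) :
    matL1 ((deltaMat V q)ᵀ * deltaMat V q - 0) ≤
      (2 ^ (q - 2) * matL1 (deltaMat V 2)) ^ 2 := by
  set W := deltaMat V q with hW
  have hentry : ∀ i j : Fin M,
      |(Wᵀ * W - 0 : Matrix (Fin M) (Fin M) ℝ) i j| ≤ l1 (fun k => W k i) * l1 (fun k => W k j) := by
    intro i j
    have : (Wᵀ * W - 0 : Matrix (Fin M) (Fin M) ℝ) i j = ∑ k, W k i * W k j := by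
      simp [Matrix.mul_apply, Matrix.transpose_apply]
    rw [this]
    calc |∑ k, W k i * W k j| ≤ ∑ k, |W k i * W k j| := Finset.abs_sum_le_sum_abs _ _
      _ ≤ ∑ k, |W k i| * l1 (fun k => W k j) := by
          refine Finset.sum_le_sum fun k _ => ?_
          rw [abs_mul]
          refine mul_le_mul_of_nonneg_left ?_ (abs_nonneg _)
          exact Finset.single_le_sum (f := fun k => |W k j|)
            (fun _ _ => abs_nonneg _) (Finset.mem_univ k)
      _ = l1 (fun k => W k i) * l1 (fun k => W k j) := by
          rw [← Finset.sum_mul]; rfl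
  have hLHS : matL1 (Wᵀ * W - 0) ≤ (∑ j : Fin M, l1 (fun k => W k j)) ^ 2 := by
    calc matL1 (Wᵀ * W - 0)
        ≤ ∑ i : Fin M, ∑ j : Fin M, l1 (fun k => W k i) * l1 (fun k => W k j) := by
          refine Finset.sum_le_sum fun i _ => Finset.sum_le_sum fun j _ => hentry i j
      _ = (∑ j : Fin M, l1 (fun k => W k j)) ^ 2 := by
          rw [sq, Finset.sum_mul_sum]
  have hcol : ∀ j : Fin M, (fun k => W k j) = delta (fun d => V d j) q := by
    intro j; rfl
  have hcol2 : ∀ j : Fin M,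
      l1 (fun k => W k j) ≤ 2 ^ (q - 2) * l1 (delta (fun d => V d j) 2) := by
    intro j; rw [hcol j]; exact l1_delta_le _ q hq2
  have hsum : (∑ j : Fin M, l1 (fun k => W k j)) ≤
      2 ^ (q - 2) * matL1 (deltaMat V 2) := by
    calc (∑ j : Fin M, l1 (fun k => W k j))
        ≤ ∑ j : Fin M, 2 ^ (q - 2) * l1 (delta (fun d => V d j) 2) :=
          Finset.sum_le_sum fun j _ => hcol2 j
      _ = 2 ^ (q - 2) * matL1 (deltaMat V 2) := by
          rw [← Finset.mul_sum]
          congr 1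
          rw [matL1, Finset.sum_comm]
          rfl
  refine le_trans hLHS ?_
  have hnn : 0 ≤ ∑ j : Fin M, l1 (fun k => W k j) :=
    Finset.sum_nonneg fun j _ => l1_nonneg _
  exact pow_le_pow_left₀ hnn hsum 2
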